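/- Let G be a finite simple graph with vertex set [n] = {1,...,n} that contains no 3-cycles (G is triangle-free), with edges ordered lexicographically. Then every tight spanning forest of G is an NBC set; in particular, for every m ≥ 0 the set of m-edge tight spanning forests of G is contained in the set of m-edge NBC sets of G. -/

import Mathlib

open Classical

/-- A list of elements of a linear order is *tight* if it contains no three-term
subsequence order-isomorphic to 231, 312 or 321. -/
def TightList {α : Type*} [LinearOrder α] (l : List α) : Prop :=
  ∀ a b c : α, [a, b, c].Sublist l →
    ¬(c < a ∧ a < b) ∧ ¬(b < c ∧ c < a) ∧ ¬(c < b ∧ b < a)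

/-- A simple graph on a linearly ordered vertex type is a *tight forest*. -/
def IsTightForest {V : Type*} [LinearOrder V] (F : SimpleGraph V) : Prop :=
  F.IsAcyclic ∧ ∀ (r v : V), (∀ w, F.Reachable r w → r ≤ w) →
    ∀ p : F.Walk r v, p.IsPath → TightList p.support

/-- `F` is a tight spanning forest of `G`. -/
def IsTSF {n : ℕ} (G : SimpleGraph (Fin n)) (F : Finset (Sym2 (Fin n))) : Prop :=
  (F : Set (Sym2 (Fin n))) ⊆ G.edgeSet ∧
    IsTightForest (SimpleGraph.fromEdgeSet (F : Set (Sym2 (Fin n))))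

/-- Lexicographic order on edges, writing each edge with its smaller endpoint first. -/
def edgeLE {n : ℕ} (e f : Sym2 (Fin n)) : Prop :=
  Sym2.inf e < Sym2.inf f ∨ (Sym2.inf e = Sym2.inf f ∧ Sym2.sup e ≤ Sym2.sup f)

/-- `B` is a broken circuit of `G`. -/
def IsBrokenCircuit {n : ℕ} (G : SimpleGraph (Fin n)) (B : Finset (Sym2 (Fin n))) : Prop :=
  ∃ (v : Fin n) (c : G.Walk v v) (e : Sym2 (Fin n)), c.IsCycle ∧ e ∈ c.edges ∧
    (∀ f ∈ c.edges, edgeLE e f) ∧ B = c.edges.toFinset.erase e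

/-- `N` is an NBC set of `G`: a set of edges of `G` containing no broken circuit. -/
def IsNBC {n : ℕ} (G : SimpleGraph (Fin n)) (N : Finset (Sym2 (Fin n))) : Prop :=
  (N : Set (Sym2 (Fin n))) ⊆ G.edgeSet ∧
    ∀ B : Finset (Sym2 (Fin n)), IsBrokenCircuit G B → ¬ B ⊆ N

section Helpers

open SimpleGraph

variable {V : Type*}

lemma walk_exists_cons {H : SimpleGraph V} {a b : V} (p : H.Walk a b) (h : p.length ≠ 0) :
    ∃ (w : V) (hadj : H.Adj a w) (t : H.Walk w b), p = Walk.cons hadj t := by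
  cases p with
  | nil => simp at h
  | cons hadj t => exact ⟨_, hadj, t, rfl⟩

lemma support_eq_concat {H : SimpleGraph V} {a b : V} (p : H.Walk a b) :
    ∃ m, p.support = m ++ [b] := by
  have h2 : p.support.reverse = b :: p.reverse.support.tail := by
    rw [← Walk.support_reverse]
    exact p.reverse.support_eq_cons
  refine ⟨p.reverse.support.tail.reverse, ?_⟩
  rw [← List.reverse_reverse p.support, h2]
  simp

lemma path_first_edge {H : SimpleGraph V} {x y : V} (p : H.Walk x y) (hp : p.IsPath)
    (e : Sym2 V) (he : e ∈ p.edges) (hx : x ∈ e) :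
    ∃ (w : V) (h : H.Adj x w) (q : H.Walk w y), p = Walk.cons h q ∧ e = s(x, w) := by
  cases p with
  | nil => simp at he
  | @cons _ w _ h q =>
    by_cases hew : e = s(x, w)
    · exact ⟨w, h, q, rfl, hew⟩
    · exfalso
      rw [Walk.edges_cons] at he
      rcases List.mem_cons.mp he with heq | hemem
      · exact hew heq
      · have hxs : x ∈ q.support := by
          induction e with
          | _ a b =>
            rcases Sym2.mem_iff.mp hx with rfl | rfl
            · exact q.fst_mem_support_of_mem_edges hemem
            · exact q.snd_mem_support_of_mem_edges hemem
        exact ((Walk.cons_isPath_iff h q).mp hp).2 hxs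

lemma isCycle_reverse {H : SimpleGraph V} {v : V} {p : H.Walk v v} (hp : p.IsCycle) :
    p.reverse.IsCycle := by
  rw [Walk.isCycle_def] at hp ⊢
  obtain ⟨ht, hnil, hnd⟩ := hp
  have hne : p.support.tail ≠ [] := by
    cases p with
    | nil => exact absurd rfl hnil
    | cons h q => simpa using q.support_ne_nil
  obtain ⟨m, hm⟩ := support_eq_concat p
  have htail : p.support.tail = m.tail ++ [v] := by
    cases m with
    | nil =>
      exfalso
      apply hne
      rw [p.support_eq_cons] at hm
      simpa using congrArg List.tail hm
    | cons a m' =>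
      rw [p.support_eq_cons] at hm
      simpa using congrArg List.tail hm
  refine ⟨(Walk.reverse_isTrail_iff p).mpr ht, ?_, ?_⟩
  · intro h
    apply hnil
    have := congrArg Walk.reverse h
    simpa using this
  · rw [Walk.support_reverse, p.support_eq_cons, htail]
    rw [htail] at hnd
    simp only [List.reverse_cons, List.reverse_append, List.reverse_singleton, List.reverse_nil,
      List.nil_append, List.singleton_append, List.cons_append, List.tail_cons]
    simp only [List.nodup_append, List.nodup_cons, List.nodup_reverse,
      List.mem_reverse, List.not_mem_nil, List.nodup_nil, List.mem_singleton,
      List.disjoint_singleton, not_false_iff, and_true, true_and] at hnd ⊢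
    tauto

lemma cycle_first_edge {H : SimpleGraph V} {v₀ : V} (c : H.Walk v₀ v₀) (hc : c.IsCycle)
    (e : Sym2 V) (he : e ∈ c.edges) (hv : v₀ ∈ e) :
    ∃ (u : V) (h : H.Adj v₀ u) (q : H.Walk u v₀),
      (Walk.cons h q).IsCycle ∧ e = s(v₀, u) ∧ (Walk.cons h q).edges.Perm c.edges := by
  cases c with
  | nil => simp at he
  | @cons _ w _ h q =>
    by_cases hew : e = s(v₀, w)
    · exact ⟨w, h, q, hc, hew, List.Perm.refl _⟩
    · have hq : q.IsPath := ((Walk.cons_isCycle_iff q h).mp hc).1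
      have hemem : e ∈ q.edges := by
        rcases List.mem_cons.mp he with heq | hm
        · exact absurd heq hew
        · exact hm
      have hrev : e ∈ q.reverse.edges := by
        rw [Walk.edges_reverse, List.mem_reverse]; exact hemem
      obtain ⟨w₂, h', t, hqe, heq₂⟩ := path_first_edge q.reverse hq.reverse e hrev hv
      have hceq : (Walk.cons h q).reverse =
          Walk.cons h' (t.append (Walk.cons h.symm Walk.nil)) := by
        rw [Walk.reverse_cons, hqe, Walk.cons_append]
      refine ⟨w₂, h', t.append (Walk.cons h.symm Walk.nil), ?_, heq₂, ?_⟩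
      · have := isCycle_reverse hc
        rwa [hceq] at this
      · have hE : (Walk.cons h' (t.append (Walk.cons h.symm Walk.nil))).edges =
            (Walk.cons h q).edges.reverse := by
          rw [← Walk.edges_reverse, hceq]
        rw [hE]
        exact List.reverse_perm _

lemma walk_support_le [LinearOrder V] {H : SimpleGraph V} {v₀ : V} {a b : V}
    (p : H.Walk a b) (ha : v₀ ≤ a) (he : ∀ f ∈ p.edges, ∀ x ∈ f, v₀ ≤ x) :
    ∀ x ∈ p.support, v₀ ≤ x := by
  induction p with
  | nil => intro x hx; rw [Walk.support_nil, List.mem_singleton] at hx; subst hx; exact ha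
  | @cons u c d h p ih =>
    intro x hx
    rw [Walk.support_cons] at hx
    rcases List.mem_cons.mp hx with rfl | hx
    · exact ha
    · refine ih ?_ ?_ x hx
      · exact he s(u, c) (by simp) c (Sym2.mem_mk_right _ _)
      · intro f hf y hy
        exact he f (by simp [hf]) y hy

lemma append_isPath {H : SimpleGraph V} {a b c : V} {p : H.Walk a b} {q : H.Walk b c}
    (hp : p.IsPath) (hq : q.IsPath) (hint : ∀ x ∈ p.support, x ∈ q.support → x = b) :
    (p.append q).IsPath := by
  rw [Walk.isPath_def, Walk.support_append]
  have hqn : q.support.Nodup := hq.support_nodup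
  have hqt : b ∉ q.support.tail := by
    intro hb
    have := q.support_eq_cons
    rw [this] at hqn
    exact (List.nodup_cons.mp hqn).1 hb
  refine List.Nodup.append hp.support_nodup ?_ ?_
  · have := q.support_eq_cons
    rw [this] at hqn
    exact (List.nodup_cons.mp hqn).2
  · intro x hxp hxq
    have hxq' : x ∈ q.support := List.mem_of_mem_tail hxq
    have := hint x hxp hxq'
    subst this
    exact hqt hxq

lemma sym2_eq_mk_inf_sup {α : Type*} [LinearOrder α] (e : Sym2 α) : e = s(e.inf, e.sup) := by
  induction e with
  | _ a b =>
    rcases le_total a b with h | h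
    · rw [Sym2.inf_mk, Sym2.sup_mk, inf_eq_left.2 h, sup_eq_right.2 h]
    · rw [Sym2.inf_mk, Sym2.sup_mk, inf_eq_right.2 h, sup_eq_left.2 h, Sym2.eq_swap]

lemma sym2_inf_le {α : Type*} [LinearOrder α] (e : Sym2 α) (x : α) (hx : x ∈ e) : e.inf ≤ x := by
  induction e with
  | _ a b =>
    rcases Sym2.mem_iff.mp hx with rfl | rfl
    · rw [Sym2.inf_mk]; exact inf_le_left
    · rw [Sym2.inf_mk]; exact inf_le_right

lemma no_triangle_walk {H : SimpleGraph V}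
    (htf : ∀ i j k : V, H.Adj i j → H.Adj j k → H.Adj i k → False)
    {a b : V} (hadj : H.Adj a b) (q : H.Walk b a) (h2 : q.length = 2) : False := by
  cases q with
  | nil => simp at h2
  | cons h1 q1 =>
    cases q1 with
    | nil => simp at h2
    | cons h2' q2 =>
      cases q2 with
      | nil => exact htf a b _ hadj h1 h2'.symm
      | cons h3 q3 => simp [SimpleGraph.Walk.length_cons] at h2

end Helpers

section Main

open SimpleGraph

lemma tsf_no_broken {n : ℕ} (G : SimpleGraph (Fin n))
    (htf : ∀ i j k : Fin n, G.Adj i j → G.Adj j k → G.Adj i k → False)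
    (F : Finset (Sym2 (Fin n)))
    (hFsub : (F : Set (Sym2 (Fin n))) ⊆ G.edgeSet)
    (hT : IsTightForest (SimpleGraph.fromEdgeSet (F : Set (Sym2 (Fin n)))))
    (B : Finset (Sym2 (Fin n))) (hB : IsBrokenCircuit G B) (hBF : B ⊆ F) : False := by
  classical
  obtain ⟨v, c, e, hc, hec, hlex, rfl⟩ := hB
  set v₀ := e.inf with hv₀
  set u := e.sup with hu
  have heq : e = s(v₀, u) := sym2_eq_mk_inf_sup e
  have hv₀u : v₀ ≤ u := Sym2.inf_le_sup e
  clear_value v₀ u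
  have hv₀e : v₀ ∈ e := by rw [heq]; exact Sym2.mem_mk_left _ _
  have hv₀sup : v₀ ∈ c.support := by
    rw [heq] at hec
    exact c.fst_mem_support_of_mem_edges hec
  have hc' := hc.rotate hv₀sup
  have hpermc : (c.rotate v₀ hv₀sup).edges.Perm c.edges := (c.rotate_edges v₀ hv₀sup).perm
  have he' : e ∈ (c.rotate v₀ hv₀sup).edges := hpermc.mem_iff.2 hec
  obtain ⟨u₁, hadj, q, hC, heq₁, hperm₁⟩ := cycle_first_edge (c.rotate v₀ hv₀sup) hc' e he' hv₀e
  have hu₁ : u = u₁ := by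
    apply Sym2.congr_right.mp
    rw [← heq, heq₁]
  subst hu₁
  have hCperm : (Walk.cons hadj q).edges.Perm c.edges := hperm₁.trans hpermc
  have hqC : ∀ f ∈ q.edges, f ∈ c.edges := fun f hf => hCperm.subset (List.mem_cons_of_mem _ hf)
  obtain ⟨hqpath, hes⟩ := (Walk.cons_isCycle_iff q hadj).mp hC
  have heq' : e ∉ q.edges := by rw [heq]; exact hes
  have hminq : ∀ f ∈ q.edges, ∀ x ∈ f, v₀ ≤ x := by
    intro f hf x hx
    have h1 := hlex f (hqC f hf)
    have h2 : v₀ ≤ f.inf := by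
      rcases h1 with h | h
      · rw [hv₀]; exact le_of_lt h
      · rw [hv₀]; exact le_of_eq h.1
    exact le_trans h2 (sym2_inf_le f x hx)
  have hqF : ∀ f ∈ q.edges, f ∈ F := by
    intro f hf
    apply hBF
    rw [Finset.mem_erase]
    exact ⟨fun h => heq' (h ▸ hf), List.mem_toFinset.mpr (hqC f hf)⟩
  set H := SimpleGraph.fromEdgeSet (F : Set (Sym2 (Fin n))) with hH
  have hqH : ∀ f ∈ q.edges, f ∈ H.edgeSet := by
    intro f hf
    rw [hH, SimpleGraph.edgeSet_fromEdgeSet]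
    exact ⟨hqF f hf, G.not_isDiag_of_mem_edgeSet (q.edges_subset_edgeSet hf)⟩
  set Pf := (q.transfer H hqH).reverse with hPfdef
  have hPfpath : Pf.IsPath := (hqpath.transfer hqH).reverse
  have hPfedges : Pf.edges = q.edges.reverse := by
    rw [hPfdef, Walk.edges_reverse, Walk.edges_transfer]
  have hPfsupp : Pf.support = q.support.reverse := by
    rw [hPfdef, Walk.support_reverse, Walk.support_transfer]
  have hPfmin : ∀ x ∈ Pf.support, v₀ ≤ x := by
    intro x hx
    rw [hPfsupp, List.mem_reverse] at hx
    exact walk_support_le q hv₀u hminq x hx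
  have hclen : 3 ≤ c.length := hc.three_le_length
  have hCl : (Walk.cons hadj q).length = c.length := by
    have := hCperm.length_eq
    rwa [Walk.length_edges, Walk.length_edges] at this
  have hql : 2 ≤ q.length := by
    rw [Walk.length_cons] at hCl; omega
  have hq3 : 3 ≤ q.length := by
    rcases Nat.lt_or_ge q.length 3 with hlt | hge
    · exact (no_triangle_walk htf hadj q (by omega)).elim
    · exact hge
  have hPflen : Pf.length = q.length := by
    rw [hPfdef, Walk.length_reverse, Walk.length_transfer]
  obtain ⟨w, hvw, t, hPf1⟩ := walk_exists_cons Pf (by omega)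
  have htlen1 : Pf.length = t.length + 1 := by rw [hPf1]; simp
  obtain ⟨x, hwx, t', ht1⟩ := walk_exists_cons t (by omega)
  have htlen2 : t.length = t'.length + 1 := by rw [ht1]; simp
  have htsupp : t.support = w :: x :: t'.support.tail := by
    rw [ht1, Walk.support_cons]
    exact congrArg (List.cons w) t'.support_eq_cons
  obtain ⟨m₁, hm₁⟩ := support_eq_concat t'
  have hm₁ne : m₁ ≠ [] := by
    intro h0
    rw [h0, List.nil_append] at hm₁
    have hlsupp := t'.length_support
    rw [hm₁] at hlsupp
    simp only [List.length_singleton] at hlsupp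
    omega
  have ht'tail : t'.support.tail = m₁.tail ++ [u] := by
    cases m₁ with
    | nil => exact absurd rfl hm₁ne
    | cons a m' =>
      rw [t'.support_eq_cons] at hm₁
      simpa using congrArg List.tail hm₁
  have htsupp2 : t.support = w :: x :: (m₁.tail ++ [u]) := by rw [htsupp, ht'tail]
  have hPfsupp2 : Pf.support = v₀ :: w :: x :: (m₁.tail ++ [u]) := by
    rw [hPf1, Walk.support_cons, htsupp2]
  have hwPf : w ∈ Pf.support := by rw [hPfsupp2]; simp
  have hv₀w : v₀ < w := lt_of_le_of_ne (hPfmin w hwPf) (Adj.ne hvw)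
  have hfe : s(v₀, w) ∈ q.edges := by
    have h1 : s(v₀, w) ∈ Pf.edges := by rw [hPf1]; simp
    rw [hPfedges, List.mem_reverse] at h1
    exact h1
  have huw : u < w := by
    have h1 := hlex s(v₀, w) (hqC _ hfe)
    rcases h1 with h | h
    · exfalso
      have hinfw : Sym2.inf s(v₀, w) = v₀ := by
        rw [Sym2.inf_mk]; exact inf_eq_left.2 hv₀w.le
      rw [hinfw, ← hv₀] at h
      exact lt_irrefl v₀ h
    · have h2 : u ≤ w := by
        have h3 := h.2
        rw [Sym2.sup_mk, sup_eq_right.2 (le_of_lt hv₀w), ← hu] at h3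
        exact h3
      rcases lt_or_eq_of_le h2 with h3 | h3
      · exact h3
      · exfalso
        rw [← h3] at hfe
        apply heq'
        rw [heq]
        exact hfe
  -- the root of the component
  set S := Finset.univ.filter (fun y => H.Reachable v₀ y) with hS
  have hv₀S : v₀ ∈ S := by
    rw [hS]
    simp only [Finset.mem_filter, Finset.mem_univ, true_and]
    exact SimpleGraph.Reachable.refl v₀
  have hSne : S.Nonempty := ⟨v₀, hv₀S⟩
  set r := S.min' hSne with hr
  have hrS : r ∈ S := S.min'_mem hSne
  have hrreach : H.Reachable v₀ r := by
    rw [hS] at hrS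
    simpa using hrS
  have hroot : ∀ y, H.Reachable r y → r ≤ y := by
    intro y hy
    apply S.min'_le
    rw [hS]
    simp only [Finset.mem_filter, Finset.mem_univ, true_and]
    exact hrreach.trans hy
  obtain ⟨Q₀⟩ := hrreach.symm
  set QW := (Q₀.toPath : H.Path r v₀).1 with hQWdef
  have hQW : QW.IsPath := (Q₀.toPath : H.Path r v₀).2
  have hacyc : H.IsAcyclic := hT.1
  have htQ : TightList QW.support := hT.2 r v₀ hroot QW hQW
  have hv₀t : v₀ ∉ t.support := by
    have h1 := hPfpath
    rw [hPf1] at h1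
    exact ((Walk.cons_isPath_iff hvw t).mp h1).2
  have htpath : t.IsPath := by
    have h1 := hPfpath
    rw [hPf1] at h1
    exact ((Walk.cons_isPath_iff hvw t).mp h1).1
  by_cases hzc : ∃ z, z ∈ QW.support ∧ z ∈ Pf.support ∧ ¬(z = v₀ ∨ z = w)
  · -- Case (i)
    obtain ⟨z, hzQ, hzP, hzne⟩ := hzc
    push_neg at hzne
    obtain ⟨hzv, hzw⟩ := hzne
    have hdrop : QW.dropUntil z hzQ = (Pf.takeUntil z hzP).reverse := by
      have h1 : (⟨QW.dropUntil z hzQ, hQW.dropUntil hzQ⟩ : H.Path z v₀) =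
          ⟨(Pf.takeUntil z hzP).reverse, (hPfpath.takeUntil hzP).reverse⟩ :=
        hacyc.path_unique _ _
      exact congrArg Subtype.val h1
    have hQeq : QW = (QW.takeUntil z hzQ).append ((Pf.takeUntil z hzP).reverse) := by
      conv_lhs => rw [← QW.take_spec hzQ]
      rw [hdrop]
    have hsplit : Pf.support =
        (Pf.takeUntil z hzP).support ++ (Pf.dropUntil z hzP).support.tail := by
      conv_lhs => rw [← Walk.take_spec Pf hzP]
      exact Walk.support_append _ _
    obtain ⟨m₂, hm₂⟩ := support_eq_concat (Pf.takeUntil z hzP)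
    have hsplit2 : (m₂ ++ [z]) ++ (Pf.dropUntil z hzP).support.tail =
        v₀ :: w :: x :: (m₁.tail ++ [u]) := by
      rw [← hm₂, ← hsplit, hPfsupp2]
    have hTK : ∃ m'', (Pf.takeUntil z hzP).support = v₀ :: w :: (m'' ++ [z]) := by
      cases m₂ with
      | nil =>
        exfalso
        simp only [List.nil_append, List.cons_append, List.singleton_append] at hsplit2
        exact hzv (List.head_eq_of_cons_eq hsplit2)
      | cons a m' =>
        cases m' with
        | nil =>
          exfalso
          simp only [List.cons_append, List.nil_append, List.singleton_append,
            List.cons.injEq] at hsplit2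
          exact hzw hsplit2.2.1
        | cons b m'' =>
          simp only [List.cons_append, List.cons.injEq] at hsplit2
          obtain ⟨rfl, rfl, -⟩ := hsplit2
          exact ⟨m'', by rw [hm₂]; simp⟩
    obtain ⟨m'', hTK⟩ := hTK
    have htail2 : ((Pf.takeUntil z hzP).reverse).support.tail = m''.reverse ++ [w, v₀] := by
      rw [Walk.support_reverse, hTK]
      simp
    obtain ⟨m₃, hm₃⟩ := support_eq_concat (QW.takeUntil z hzQ)
    have hQsupp := congrArg Walk.support hQeq
    rw [Walk.support_append, hm₃, htail2] at hQsupp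
    have hsub : [z, w, v₀].Sublist QW.support := by
      rw [hQsupp]
      have s1 : [w, v₀].Sublist (m''.reverse ++ [w, v₀]) := List.sublist_append_right _ _
      have s2 : [z, w, v₀].Sublist (z :: (m''.reverse ++ [w, v₀])) := List.Sublist.cons₂ z s1
      have s3 := s2.trans (List.sublist_append_right m₃ (z :: (m''.reverse ++ [w, v₀])))
      simpa [List.append_assoc] using s3
    obtain ⟨t1, t2, t3⟩ := htQ z w v₀ hsub
    have hv₀z : v₀ < z := lt_of_le_of_ne (hPfmin z hzP) (Ne.symm hzv)
    rcases lt_trichotomy z w with hlt | heqzw | hgt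
    · exact t1 ⟨hv₀z, hlt⟩
    · exact hzw heqzw
    · exact t3 ⟨hv₀w, hgt⟩
  · -- Case (ii)
    have hkey : ∀ z, z ∈ QW.support → z ∈ Pf.support → z = v₀ ∨ z = w := by
      intro z h1 h2
      by_contra h
      exact hzc ⟨z, h1, h2, h⟩
    by_cases hwQ : w ∈ QW.support
    · -- Subcase A
      have hRpath : ((QW.takeUntil w hwQ).append t).IsPath := by
        apply append_isPath (hQW.takeUntil hwQ) htpath
        intro y hy1 hy2
        have hyQ : y ∈ QW.support := QW.support_takeUntil_subset hwQ hy1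
        have hyP : y ∈ Pf.support := by
          rw [hPf1, Walk.support_cons]
          exact List.mem_cons_of_mem _ hy2
        rcases hkey y hyQ hyP with rfl | rfl
        · exact absurd hy2 hv₀t
        · rfl
      have htR : TightList ((QW.takeUntil w hwQ).append t).support :=
        hT.2 r u hroot _ hRpath
      obtain ⟨m₄, hm₄⟩ := support_eq_concat (QW.takeUntil w hwQ)
      have hRsupp : ((QW.takeUntil w hwQ).append t).support =
          (m₄ ++ [w]) ++ (x :: (m₁.tail ++ [u])) := by
        rw [Walk.support_append, hm₄, htsupp2]
        rfl
      have hsub : [w, x, u].Sublist ((QW.takeUntil w hwQ).append t).support := by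
        rw [hRsupp]
        have s1 : [u].Sublist (m₁.tail ++ [u]) := List.sublist_append_right _ _
        have s2 : [x, u].Sublist (x :: (m₁.tail ++ [u])) := List.Sublist.cons₂ x s1
        have s3 : [w, x, u].Sublist (w :: (x :: (m₁.tail ++ [u]))) := List.Sublist.cons₂ w s2
        have s4 := s3.trans (List.sublist_append_right m₄ (w :: (x :: (m₁.tail ++ [u]))))
        simpa [List.append_assoc] using s4
      obtain ⟨t1, t2, t3⟩ := htR w x u hsub
      have hnd : [w, x, u].Nodup := hsub.nodup hRpath.support_nodup
      simp only [List.nodup_cons, List.mem_cons, List.mem_singleton, List.not_mem_nil,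
        not_or, List.nodup_nil, and_true] at hnd
      rcases lt_trichotomy x u with h1' | h2' | h3'
      · exact t2 ⟨h1', huw⟩
      · exact hnd.2.1.1 h2'
      · rcases lt_trichotomy x w with ha | hb | hc
        · exact t3 ⟨h3', ha⟩
        · exact hnd.1.1 hb.symm
        · exact t1 ⟨huw, hc⟩
    · -- Subcase B
      have hRpath : (QW.append Pf).IsPath := by
        apply append_isPath hQW hPfpath
        intro y hy1 hy2
        rcases hkey y hy1 hy2 with rfl | rfl
        · rfl
        · exact absurd hy1 hwQ
      have htR : TightList (QW.append Pf).support := hT.2 r u hroot _ hRpath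
      have hRsupp : (QW.append Pf).support =
          QW.support ++ (w :: x :: (m₁.tail ++ [u])) := by
        rw [Walk.support_append, hPfsupp2]
        rfl
      have hsub : [w, x, u].Sublist (QW.append Pf).support := by
        rw [hRsupp]
        have s1 : [u].Sublist (m₁.tail ++ [u]) := List.sublist_append_right _ _
        have s2 : [x, u].Sublist (x :: (m₁.tail ++ [u])) := List.Sublist.cons₂ x s1
        have s3 : [w, x, u].Sublist (w :: (x :: (m₁.tail ++ [u]))) := List.Sublist.cons₂ w s2
        exact s3.trans (List.sublist_append_right QW.support _)
      obtain ⟨t1, t2, t3⟩ := htR w x u hsub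
      have hnd : [w, x, u].Nodup := hsub.nodup hRpath.support_nodup
      simp only [List.nodup_cons, List.mem_cons, List.mem_singleton, List.not_mem_nil,
        not_or, List.nodup_nil, and_true] at hnd
      rcases lt_trichotomy x u with h1' | h2' | h3'
      · exact t2 ⟨h1', huw⟩
      · exact hnd.2.1.1 h2'
      · rcases lt_trichotomy x w with ha | hb | hc
        · exact t3 ⟨h3', ha⟩
        · exact hnd.1.1 hb.symm
        · exact t1 ⟨huw, hc⟩

end Main

theorem stmt_14 {n : ℕ} (G : SimpleGraph (Fin n))
    (htf : ∀ i j k : Fin n, G.Adj i j → G.Adj j k → G.Adj i k → False) :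
    (∀ F : Finset (Sym2 (Fin n)), IsTSF G F → IsNBC G F) ∧
    ∀ m : ℕ,
      {F : Finset (Sym2 (Fin n)) | IsTSF G F ∧ F.card = m} ⊆
        {F : Finset (Sym2 (Fin n)) | IsNBC G F ∧ F.card = m} := by
  have main : ∀ F : Finset (Sym2 (Fin n)), IsTSF G F → IsNBC G F := by
    intro F hF
    exact ⟨hF.1, fun B hB hBF => tsf_no_broken G htf F hF.1 hF.2 B hB hBF⟩
  exact ⟨main, fun m F hF => ⟨main F hF.1, hF.2⟩⟩
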